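/- Let $b > 0$, $Q > 0$, $M \in \mathbb{R}$, and define $f : (0,\infty) \to \mathbb{R}$ by $f(r) = 1 - \frac{2M}{r} + \frac{2b^2}{3} r^2 - \frac{2b^2}{r} \int_0^r \sqrt{s^4 + Q^2/b^2}\, ds$. If $R_0 > 0$ satisfies $f(R_0) = 0$ and $f'(R_0) = 0$, then $4 Q^2 b^2 > 1$, $R_0 = \frac{\sqrt{4 Q^2 b^2 - 1}}{2 b}$, and $\frac{1}{2} f''(R_0) = \frac{4 b^2}{4 Q^2 b^2 + 1}$. -/

import Mathlib

set_option maxHeartbeats 1000000 in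
/-- Extremal Born--Infeld black holes: a double root `R₀ > 0` of the
Born--Infeld metric function exists only above the charge gap `4Q²b² > 1`,
with `R₀ = √(4Q²b²-1)/(2b)` and `½ f''(R₀) = 4b²/(4Q²b²+1)`. -/
theorem bornInfeld_extremal_horizon
    (b Q M R0 : ℝ) (hb : 0 < b) (hQ : 0 < Q) (hR0 : 0 < R0) (f : ℝ → ℝ)
    (hf : f = fun r => 1 - 2 * M / r + 2 * b ^ 2 / 3 * r ^ 2
      - 2 * b ^ 2 / r * ∫ s in (0:ℝ)..r, Real.sqrt (s ^ 4 + Q ^ 2 / b ^ 2))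
    (hroot : f R0 = 0) (hroot' : deriv f R0 = 0) :
    4 * Q ^ 2 * b ^ 2 > 1 ∧
    R0 = Real.sqrt (4 * Q ^ 2 * b ^ 2 - 1) / (2 * b) ∧
    (1 / 2) * deriv (deriv f) R0 = 4 * b ^ 2 / (4 * Q ^ 2 * b ^ 2 + 1) := by
  have hb2 : (0:ℝ) < b ^ 2 := by positivity
  have hrne : R0 ≠ 0 := hR0.ne'
  set h : ℝ → ℝ := fun s => Real.sqrt (s ^ 4 + Q ^ 2 / b ^ 2) with hh
  have hcont : Continuous h := by
    apply Real.continuous_sqrt.comp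
    continuity
  set g : ℝ → ℝ := fun r => ∫ s in (0:ℝ)..r, h s with hg
  have hgd : ∀ r : ℝ, HasDerivAt g (h r) r := fun r =>
    intervalIntegral.integral_hasDerivAt_right (hcont.intervalIntegrable _ _)
      (hcont.stronglyMeasurable.stronglyMeasurableAtFilter) hcont.continuousAt
  have hargpos : ∀ r : ℝ, 0 < r ^ 4 + Q ^ 2 / b ^ 2 := fun r => by positivity
  have hhpos : ∀ r : ℝ, 0 < h r := fun r => Real.sqrt_pos.mpr (hargpos r)
  have hhsq : ∀ r : ℝ, h r ^ 2 = r ^ 4 + Q ^ 2 / b ^ 2 := fun r =>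
    Real.sq_sqrt (hargpos r).le
  -- first derivative
  set F1 : ℝ → ℝ := fun r => 2 * M / r ^ 2 + 4 * b ^ 2 / 3 * r
      + 2 * b ^ 2 * g r / r ^ 2 - 2 * b ^ 2 / r * h r with hF1
  have hfd : ∀ r : ℝ, 0 < r → HasDerivAt f (F1 r) r := by
    intro r hr
    have hrne' : r ≠ 0 := hr.ne'
    have h1 : HasDerivAt (fun x : ℝ => 2 * M / x) (2 * M * (-(r ^ 2)⁻¹)) r := by
      simpa [div_eq_mul_inv] using (hasDerivAt_inv hrne').const_mul (2 * M)
    have h2 : HasDerivAt (fun x : ℝ => 2 * b ^ 2 / 3 * x ^ 2)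
        (2 * b ^ 2 / 3 * (2 * r)) r := by
      simpa using ((hasDerivAt_pow 2 r).const_mul (2 * b ^ 2 / 3))
    have h3 : HasDerivAt (fun x : ℝ => 2 * b ^ 2 / x * g x)
        (2 * b ^ 2 * (-(r ^ 2)⁻¹) * g r + 2 * b ^ 2 / r * h r) r := by
      have := (((hasDerivAt_inv hrne').const_mul (2 * b ^ 2)).fun_mul (hgd r))
      simpa [div_eq_mul_inv, mul_comm, mul_left_comm, mul_assoc] using this
    have hsum : HasDerivAt f
        (0 - 2 * M * (-(r ^ 2)⁻¹) + 2 * b ^ 2 / 3 * (2 * r)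
          - (2 * b ^ 2 * (-(r ^ 2)⁻¹) * g r + 2 * b ^ 2 / r * h r)) r := by
      rw [hf]
      exact (((hasDerivAt_const r (1:ℝ)).sub h1).add h2).sub h3
    have heq : 2 * M / r ^ 2 + 4 * b ^ 2 / 3 * r
          + 2 * b ^ 2 * g r / r ^ 2 - 2 * b ^ 2 / r * h r
        = 0 - 2 * M * (-(r ^ 2)⁻¹) + 2 * b ^ 2 / 3 * (2 * r)
          - (2 * b ^ 2 * (-(r ^ 2)⁻¹) * g r + 2 * b ^ 2 / r * h r) := by
      field_simp
      ring
    rw [hF1]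
    simpa [heq] using hsum
  have hev : ∀ᶠ r in nhds R0, deriv f r = F1 r :=
    (eventually_gt_nhds hR0).mono fun r hr => (hfd r hr).deriv
  have hderiv1 : deriv f R0 = F1 R0 := (hfd R0 hR0).deriv
  -- second derivative
  have hhd : HasDerivAt h (4 * R0 ^ 3 / (2 * h R0)) R0 := by
    have hp : HasDerivAt (fun x : ℝ => x ^ 4 + Q ^ 2 / b ^ 2) (4 * R0 ^ 3) R0 := by
      simpa using (hasDerivAt_pow 4 R0).add_const (Q ^ 2 / b ^ 2)
    simpa [hh] using hp.sqrt (hargpos R0).ne'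
  set D2 : ℝ := 2 * M * (-2 / R0 ^ 3) + 4 * b ^ 2 / 3
      + (2 * b ^ 2 * (h R0 * (R0 ^ 2)⁻¹ + g R0 * (-2 / R0 ^ 3)))
      - (2 * b ^ 2 * (-(R0 ^ 2)⁻¹) * h R0 + 2 * b ^ 2 / R0 * (4 * R0 ^ 3 / (2 * h R0)))
    with hD2
  have hF1d : HasDerivAt F1 D2 R0 := by
    have hinv2 : HasDerivAt (fun x : ℝ => (x ^ 2)⁻¹) (-2 / R0 ^ 3) R0 := by
      have := (hasDerivAt_pow 2 R0).fun_inv (by positivity : R0 ^ 2 ≠ 0)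
      refine this.congr_deriv ?_
      field_simp
      ring
    have h1 : HasDerivAt (fun x : ℝ => 2 * M / x ^ 2) (2 * M * (-2 / R0 ^ 3)) R0 := by
      simpa [div_eq_mul_inv] using hinv2.const_mul (2 * M)
    have h2 : HasDerivAt (fun x : ℝ => 4 * b ^ 2 / 3 * x) (4 * b ^ 2 / 3) R0 := by
      simpa using (hasDerivAt_id R0).const_mul (4 * b ^ 2 / 3)
    have h3 : HasDerivAt (fun x : ℝ => 2 * b ^ 2 * g x / x ^ 2)
        (2 * b ^ 2 * (h R0 * (R0 ^ 2)⁻¹ + g R0 * (-2 / R0 ^ 3))) R0 := by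
      have := (((hgd R0).mul hinv2).const_mul (2 * b ^ 2))
      simpa [div_eq_mul_inv, mul_comm, mul_left_comm, mul_assoc] using this
    have h4 : HasDerivAt (fun x : ℝ => 2 * b ^ 2 / x * h x)
        (2 * b ^ 2 * (-(R0 ^ 2)⁻¹) * h R0 + 2 * b ^ 2 / R0 * (4 * R0 ^ 3 / (2 * h R0))) R0 := by
      have := (((hasDerivAt_inv hrne).const_mul (2 * b ^ 2)).fun_mul hhd)
      simpa [div_eq_mul_inv, mul_comm, mul_left_comm, mul_assoc] using this
    rw [hF1, hD2]
    exact ((h1.add h2).add h3).sub h4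
  have hderiv2 : deriv (deriv f) R0 = D2 := by
    rw [Filter.EventuallyEq.deriv_eq hev]
    exact hF1d.deriv
  -- algebraic relations
  set S := h R0 with hSdef
  set G := g R0 with hGdef
  have hSpos : 0 < S := hhpos R0
  have hS2' : b ^ 2 * S ^ 2 = b ^ 2 * R0 ^ 4 + Q ^ 2 := by
    rw [hSdef, hhsq R0]; field_simp
  have E1 : 1 - 2 * M / R0 + 2 * b ^ 2 / 3 * R0 ^ 2 - 2 * b ^ 2 / R0 * G = 0 := by
    rw [hf] at hroot
    simpa [hGdef, hg, hh] using hroot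
  have E2 : 2 * M / R0 ^ 2 + 4 * b ^ 2 / 3 * R0 + 2 * b ^ 2 * G / R0 ^ 2
      - 2 * b ^ 2 / R0 * S = 0 := by
    rw [hroot'] at hderiv1
    exact hderiv1.symm
  have E1' : R0 - 2 * M + 2 * b ^ 2 / 3 * R0 ^ 3 - 2 * b ^ 2 * G = 0 := by
    have h0 := mul_eq_zero_of_right R0 E1
    field_simp at h0
    have h1 : (3 * R0 ^ 2) * (R0 - 2 * M + 2 * b ^ 2 / 3 * R0 ^ 3 - 2 * b ^ 2 * G) = 0 := by
      linear_combination R0 ^ 2 * h0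
    exact (mul_eq_zero.mp h1).resolve_left (by positivity : (0:ℝ) < 3 * R0 ^ 2).ne'
  have E2' : 2 * M + 4 * b ^ 2 / 3 * R0 ^ 3 + 2 * b ^ 2 * G - 2 * b ^ 2 * R0 * S = 0 := by
    have h0 := mul_eq_zero_of_right (R0 ^ 2) E2
    field_simp at h0
    have h1 : (3 * R0 ^ 5) * (2 * M + 4 * b ^ 2 / 3 * R0 ^ 3 + 2 * b ^ 2 * G - 2 * b ^ 2 * R0 * S) = 0 := by
      linear_combination R0 ^ 5 * h0
    exact (mul_eq_zero.mp h1).resolve_left (by positivity : (0:ℝ) < 3 * R0 ^ 5).ne'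
  have hKey : 1 + 2 * b ^ 2 * R0 ^ 2 = 2 * b ^ 2 * S := by
    have h0 : R0 * (1 + 2 * b ^ 2 * R0 ^ 2) = R0 * (2 * b ^ 2 * S) := by
      linear_combination E1' + E2'
    exact mul_left_cancel₀ hrne h0
  have hMain : 4 * b ^ 2 * R0 ^ 2 + 1 = 4 * Q ^ 2 * b ^ 2 := by
    linear_combination (1 + 2 * b ^ 2 * R0 ^ 2 + 2 * b ^ 2 * S) * hKey + 4 * b ^ 2 * hS2'
  have hgap : 4 * Q ^ 2 * b ^ 2 > 1 := by nlinarith [hMain, mul_pos hb2 (mul_pos hR0 hR0)]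
  refine ⟨hgap, ?_, ?_⟩
  · have hsq : 4 * Q ^ 2 * b ^ 2 - 1 = (2 * b * R0) ^ 2 := by nlinarith [hMain]
    rw [hsq, Real.sqrt_sq (by positivity)]
    field_simp
  · have hM : 2 * M = R0 + 2 * b ^ 2 / 3 * R0 ^ 3 - 2 * b ^ 2 * G := by linarith
    have hSval : S = (1 + 2 * b ^ 2 * R0 ^ 2) / (2 * b ^ 2) := by
      field_simp
      linarith [hKey]
    have e1 : D2 = -2 / R0 ^ 2 + 4 * b ^ 2 * S / R0 ^ 2 - 4 * b ^ 2 * R0 ^ 2 / S := by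
      rw [hD2, hM]
      field_simp
      ring
    have e2 : -2 / R0 ^ 2 + 4 * b ^ 2 * S / R0 ^ 2 - 4 * b ^ 2 * R0 ^ 2 / S
        = 4 * b ^ 2 - 8 * b ^ 4 * R0 ^ 2 / (1 + 2 * b ^ 2 * R0 ^ 2) := by
      rw [hSval]
      have hden : (1 + 2 * b ^ 2 * R0 ^ 2) ≠ 0 := by positivity
      field_simp
      ring
    have hdpos : (0:ℝ) < 4 * Q ^ 2 * b ^ 2 + 1 := by linarith
    have e3 : 4 * b ^ 2 - 8 * b ^ 4 * R0 ^ 2 / (1 + 2 * b ^ 2 * R0 ^ 2)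
        = 8 * b ^ 2 / (4 * Q ^ 2 * b ^ 2 + 1) := by
      have hden : (1 + 2 * b ^ 2 * R0 ^ 2) ≠ 0 := by positivity
      field_simp
      nlinarith [hMain]
    rw [hderiv2, e1, e2, e3]
    ring
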